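/- Let X be an EFX allocation with additive valuations, and suppose a single unallocated good g with g ∉ X_j is added to agent j's bundle, no other bundle changing. If some agent i with v_i(g') ≥ v_i(g) also received a good g' added to X_i, then i does not envy X_j ∪ {g} up to any two goods: for all distinct g_1, g_2 ∈ X_j ∪ {g}, v_i((X_j ∪ {g}) \ {g_1, g_2}) ≤ v_i(X_i ∪ {g'}). -/
import Mathlib


open Finset

/-- let `X` be EFX (w.r.t. agent `i`'s additive valuation `u`),
let good `g ∉ X_j` be added to agent `j`'s bundle, and let agent `i` receive a
good `g' ∉ X_i` with `u g' ≥ u g`.  Then `i` does not envy `X_j ∪ {g}` up to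
any two goods: for all distinct `g1, g2 ∈ X_j ∪ {g}`,
`u((X_j ∪ {g}) \ {g1, g2}) ≤ u(X_i ∪ {g'})`. -/
theorem stmt_10 (G : Type) [DecidableEq G]
    (u : G → ℝ) (hu : ∀ x, 0 ≤ u x)
    (Xi Xj : Finset G)
    (hEFX : ∀ h ∈ Xj, ∑ x ∈ Xj.erase h, u x ≤ ∑ x ∈ Xi, u x)
    (g : G) (hg : g ∉ Xj)
    (g' : G) (hg' : g' ∉ Xi) (hgg' : u g ≤ u g') :
    ∀ g1 g2 : G, g1 ≠ g2 → g1 ∈ insert g Xj → g2 ∈ insert g Xj →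
      ∑ x ∈ (insert g Xj) \ {g1, g2}, u x ≤ ∑ x ∈ insert g' Xi, u x := by
  intro g1 g2 h12 h1 h2
  have hIns : ∑ x ∈ insert g' Xi, u x = u g' + ∑ x ∈ Xi, u x :=
    Finset.sum_insert hg'
  have key : ∀ h ∈ Xj, ∑ x ∈ (insert g Xj) \ {g, h}, u x ≤ ∑ x ∈ insert g' Xi, u x := by
    intro h hh
    have hset : (insert g Xj) \ {g, h} = Xj.erase h := by
      ext x
      simp only [Finset.mem_sdiff, Finset.mem_insert, Finset.mem_erase,
        Finset.mem_insert, Finset.mem_singleton, not_or]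
      constructor
      · rintro ⟨hx | hx, hxg, hxh⟩
        · exact absurd hx hxg
        · exact ⟨hxh, hx⟩
      · rintro ⟨hxh, hx⟩
        exact ⟨Or.inr hx, fun hxg => hg (hxg ▸ hx), hxh⟩
    rw [hset, hIns]
    have := hEFX h hh
    linarith [hu g']
  rcases Finset.mem_insert.mp h1 with rfl | h1'
  · have h2' : g2 ∈ Xj := (Finset.mem_insert.mp h2).resolve_left (fun h => h12 h.symm)
    exact key g2 h2'
  · rcases Finset.mem_insert.mp h2 with rfl | h2'
    · rw [Finset.pair_comm]
      exact key g1 h1'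
    · -- both in Xj
      have hgnot : g ∉ Xj \ {g1, g2} := fun h => hg (Finset.mem_sdiff.mp h).1
      have hset : (insert g Xj) \ {g1, g2} = insert g (Xj \ {g1, g2}) := by
        ext x
        simp only [Finset.mem_sdiff, Finset.mem_insert, Finset.mem_singleton, not_or]
        constructor
        · rintro ⟨hx | hx, hx1, hx2⟩
          · exact Or.inl hx
          · exact Or.inr ⟨hx, hx1, hx2⟩
        · rintro (rfl | ⟨hx, hx1, hx2⟩)
          · exact ⟨Or.inl rfl, fun h => hg (h ▸ h1'), fun h => hg (h ▸ h2')⟩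
          · exact ⟨Or.inr hx, hx1, hx2⟩
      rw [hset, Finset.sum_insert hgnot, hIns]
      have hsub : Xj \ {g1, g2} ⊆ Xj.erase g1 := by
        intro x hx
        rcases Finset.mem_sdiff.mp hx with ⟨hxj, hxp⟩
        simp only [Finset.mem_insert, Finset.mem_singleton, not_or] at hxp
        exact Finset.mem_erase.mpr ⟨hxp.1, hxj⟩
      have hmono : ∑ x ∈ Xj \ {g1, g2}, u x ≤ ∑ x ∈ Xj.erase g1, u x :=
        Finset.sum_le_sum_of_subset_of_nonneg hsub (fun x _ _ => hu x)
      have := hEFX g1 h1'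
      linarith
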